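/- For every probabilistic choice function ρ there exists a probability distribution π over choice types that represents ρ and satisfies π(⊴ s) = min_{i∈{1,…,n}} P_i(s_i) for every choice type s (the distribution induced by applying the Fréchet–Hoeffding upper bound (min-copula) to the cumulative choice functions). -/
import Mathlib


open Finset

variable {n : ℕ} {S : Fin n → Type*} [∀ i, Fintype (S i)] [∀ i, LinearOrder (S i)]

/-- `ρ` is a probabilistic choice function: each `ρ i` is a probability distribution on `S i`. -/
def IsPCF (ρ : ∀ i, S i → ℝ) : Prop :=
  (∀ i (x : S i), 0 ≤ ρ i x) ∧ ∀ i, ∑ x : S i, ρ i x = 1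

/-- The cumulative choice function `P_i(x) = ∑_{y ≤ x} ρ_i(y)`. -/
noncomputable def cumul (ρ : ∀ i, S i → ℝ) (i : Fin n) (x : S i) : ℝ :=
  ∑ y ∈ Finset.univ.filter (fun y => y ≤ x), ρ i y

/-- `π` is a probability distribution over choice types. -/
def IsDist (π : (∀ i, S i) → ℝ) : Prop :=
  (∀ s, 0 ≤ π s) ∧ ∑ s : ∀ i, S i, π s = 1

/-- `π` represents `ρ`: the marginals of `π` agree with `ρ`. -/
def Represents (π : (∀ i, S i) → ℝ) (ρ : ∀ i, S i → ℝ) : Prop :=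
  ∀ i (x : S i), ∑ s ∈ Finset.univ.filter (fun s : ∀ i, S i => s i = x), π s = ρ i x

/-- `π(⊴ s)`: total mass on choice types componentwise below `s`. -/
noncomputable def cdfLe (π : (∀ i, S i) → ℝ) (s : ∀ i, S i) : ℝ :=
  ∑ t ∈ Finset.univ.filter (fun t : ∀ i, S i => ∀ i, t i ≤ s i), π t

section Aux

open MeasureTheory Set

/-- The "lower" cumulative: `∑_{y < x} ρ_i(y)`. -/
noncomputable def lowcum (ρ : ∀ i, S i → ℝ) (i : Fin n) (x : S i) : ℝ :=
  ∑ y ∈ Finset.univ.filter (fun y => y < x), ρ i y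

/-- The half-open interval attached to choice `x` in coordinate `i`. -/
noncomputable def iv (ρ : ∀ i, S i → ℝ) (i : Fin n) (x : S i) : Set ℝ :=
  Set.Ioc (lowcum ρ i x) (cumul ρ i x)

/-- The set of "uniform values" giving rise to the choice type `t`. -/
noncomputable def Aset (ρ : ∀ i, S i → ℝ) (t : ∀ i, S i) : Set ℝ :=
  ⋂ i, iv ρ i (t i)

variable (ρ : ∀ i, S i → ℝ)

lemma cumul_eq_lowcum_add (i : Fin n) (x : S i) :
    cumul ρ i x = lowcum ρ i x + ρ i x := by
  classical
  have h : (Finset.univ.filter (fun y : S i => y ≤ x))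
      = insert x (Finset.univ.filter (fun y : S i => y < x)) := by
    ext y
    simp only [Finset.mem_filter, Finset.mem_univ, true_and, Finset.mem_insert]
    constructor
    · intro hy; rcases lt_or_eq_of_le hy with h | h
      · exact Or.inr h
      · exact Or.inl h
    · rintro (rfl | hy)
      · exact le_rfl
      · exact le_of_lt hy
  rw [cumul, h, Finset.sum_insert (by simp), lowcum]
  ring

lemma lowcum_nonneg (hpos : ∀ i (x : S i), 0 ≤ ρ i x) (i : Fin n) (x : S i) :
    0 ≤ lowcum ρ i x :=
  Finset.sum_nonneg fun y _ => hpos i y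

lemma cumul_nonneg (hpos : ∀ i (x : S i), 0 ≤ ρ i x) (i : Fin n) (x : S i) :
    0 ≤ cumul ρ i x :=
  Finset.sum_nonneg fun y _ => hpos i y

lemma cumul_mono (hpos : ∀ i (x : S i), 0 ≤ ρ i x) {i : Fin n} {x x' : S i}
    (h : x ≤ x') : cumul ρ i x ≤ cumul ρ i x' := by
  apply Finset.sum_le_sum_of_subset_of_nonneg
  · intro y hy
    simp only [Finset.mem_filter, Finset.mem_univ, true_and] at hy ⊢
    exact hy.trans h
  · exact fun y _ _ => hpos i y

lemma cumul_le_lowcum (hpos : ∀ i (x : S i), 0 ≤ ρ i x) {i : Fin n} {x x' : S i}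
    (h : x < x') : cumul ρ i x ≤ lowcum ρ i x' := by
  apply Finset.sum_le_sum_of_subset_of_nonneg
  · intro y hy
    simp only [Finset.mem_filter, Finset.mem_univ, true_and] at hy ⊢
    exact lt_of_le_of_lt hy h
  · exact fun y _ _ => hpos i y

lemma cumul_le_one (hpos : ∀ i (x : S i), 0 ≤ ρ i x)
    (hsum : ∀ i, ∑ x : S i, ρ i x = 1) (i : Fin n) (x : S i) :
    cumul ρ i x ≤ 1 := by
  rw [← hsum i]
  exact Finset.sum_le_sum_of_subset_of_nonneg (Finset.filter_subset _ _)
    (fun y _ _ => hpos i y)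

/-- Coverage: every `u ∈ (0, P_i(z)]` lies in some interval `iv ρ i x` with `x ≤ z`. -/
lemma cover (hpos : ∀ i (x : S i), 0 ≤ ρ i x) {i : Fin n} {u : ℝ} {z : S i}
    (h0 : 0 < u) (hz : u ≤ cumul ρ i z) : ∃ x, x ≤ z ∧ u ∈ iv ρ i x := by
  classical
  set F := Finset.univ.filter (fun x : S i => u ≤ cumul ρ i x) with hF
  have hzF : z ∈ F := by simp [hF, hz]
  have hFne : F.Nonempty := ⟨z, hzF⟩
  set x := F.min' hFne with hx
  refine ⟨x, F.min'_le z hzF, ?_, ?_⟩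
  · -- lowcum ρ i x < u
    by_cases hG : (Finset.univ.filter (fun y : S i => y < x)).Nonempty
    · set w := (Finset.univ.filter (fun y : S i => y < x)).max' hG with hw
      have hwx : w < x := by
        have h2 := (Finset.univ.filter (fun y : S i => y < x)).max'_mem hG
        rw [Finset.mem_filter] at h2
        exact h2.2
      have heq : Finset.univ.filter (fun y : S i => y < x)
          = Finset.univ.filter (fun y : S i => y ≤ w) := by
        ext y
        simp only [Finset.mem_filter, Finset.mem_univ, true_and]
        constructor
        · intro hy; exact Finset.le_max' _ _ (by simp [hy])
        · intro hy; exact lt_of_le_of_lt hy hwx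
      have hwF : w ∉ F := fun hmem => absurd (F.min'_le w hmem) (not_le.mpr hwx)
      have hlt : cumul ρ i w < u := by
        by_contra hle
        push_neg at hle
        exact hwF (by simp [hF, hle])
      show lowcum ρ i x < u
      rw [lowcum, heq]
      exact hlt
    · have : lowcum ρ i x = 0 := by
        rw [lowcum, Finset.not_nonempty_iff_eq_empty.mp hG, Finset.sum_empty]
      rw [this]; exact h0
  · -- u ≤ cumul ρ i x
    have := F.min'_mem hFne
    simpa [hF] using this

end Aux

section Aux2

open MeasureTheory Set

variable (ρ : ∀ i, S i → ℝ)

lemma iv_disjoint (hpos : ∀ i (x : S i), 0 ≤ ρ i x) {i : Fin n} {x x' : S i}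
    (h : x ≠ x') : Disjoint (iv ρ i x) (iv ρ i x') := by
  have key : ∀ {a b : S i}, a < b → Disjoint (iv ρ i a) (iv ρ i b) := by
    intro a b hab
    apply Set.disjoint_left.mpr
    intro u hu hu'
    exact absurd (hu.2.trans ((cumul_le_lowcum ρ hpos hab))) (not_le.mpr hu'.1)
  rcases h.lt_or_gt with h | h
  · exact key h
  · exact (key h).symm

lemma Aset_measurable (t : ∀ i, S i) : MeasurableSet (Aset ρ t) :=
  MeasurableSet.iInter fun _ => measurableSet_Ioc

lemma Aset_subset (t : ∀ i, S i) (i : Fin n) : Aset ρ t ⊆ iv ρ i (t i) :=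
  Set.iInter_subset _ i

lemma Aset_volume_ne_top (hn : 0 < n) (t : ∀ i, S i) : volume (Aset ρ t) ≠ ⊤ := by
  have h1 : volume (Aset ρ t) ≤ volume (iv ρ ⟨0, hn⟩ (t ⟨0, hn⟩)) :=
    measure_mono (Aset_subset ρ t _)
  rw [iv, Real.volume_Ioc] at h1
  exact ne_top_of_le_ne_top ENNReal.ofReal_ne_top h1

lemma Aset_pairwise_disjoint (hpos : ∀ i (x : S i), 0 ≤ ρ i x)
    {t t' : ∀ i, S i} (hne : t ≠ t') : Disjoint (Aset ρ t) (Aset ρ t') := by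
  have : ∃ i, t i ≠ t' i := by
    by_contra h; push_neg at h; exact hne (funext h)
  obtain ⟨i, hi⟩ := this
  exact Set.disjoint_of_subset (Aset_subset ρ t i) (Aset_subset ρ t' i)
    (iv_disjoint ρ hpos hi)

lemma sum_vol (hn : 0 < n) (hpos : ∀ i (x : S i), 0 ≤ ρ i x)
    (F : Finset (∀ i, S i)) :
    ∑ t ∈ F, (volume (Aset ρ t)).toReal = (volume (⋃ t ∈ F, Aset ρ t)).toReal := by
  rw [measure_biUnion_finset ?hd (fun t _ => Aset_measurable ρ t)]
  · exact (ENNReal.toReal_sum fun t _ => Aset_volume_ne_top ρ hn t).symm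
  case hd =>
    intro t _ t' _ hne
    exact Aset_pairwise_disjoint ρ hpos hne

lemma vol_iv (hpos : ∀ i (x : S i), 0 ≤ ρ i x) (i : Fin n) (x : S i) :
    (volume (iv ρ i x)).toReal = ρ i x := by
  rw [iv, Real.volume_Ioc]
  have h : cumul ρ i x - lowcum ρ i x = ρ i x := by
    rw [cumul_eq_lowcum_add]; ring
  rw [h, ENNReal.toReal_ofReal (hpos i x)]

lemma vol_Ioc0 {m : ℝ} (h : 0 ≤ m) : (volume (Set.Ioc (0:ℝ) m)).toReal = m := by
  rw [Real.volume_Ioc, sub_zero, ENNReal.toReal_ofReal h]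

end Aux2

open MeasureTheory in
set_option maxHeartbeats 1000000 in
/-- every pcf admits a representation whose joint cdf is the
Fréchet–Hoeffding upper bound (min-copula) of the marginal cumulative choice functions. -/
theorem min_copula_representation_exists (hn : 0 < n) [∀ i, Nonempty (S i)]
    (ρ : ∀ i, S i → ℝ) (hρ : IsPCF ρ) :
    ∃ π : (∀ i, S i) → ℝ, IsDist π ∧ Represents π ρ ∧
      ∀ s : ∀ i, S i, cdfLe π s = ⨅ i, cumul ρ i (s i) := by
  classical
  obtain ⟨hpos, hsum⟩ := hρ
  set π : (∀ i, S i) → ℝ := fun t => (volume (Aset ρ t)).toReal with hπ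
  have i0 : Fin n := ⟨0, hn⟩
  haveI : Nonempty (Fin n) := ⟨i0⟩
  -- a maximal element in each coordinate
  set mx : ∀ j, S j := fun j => (Finset.univ : Finset (S j)).max' Finset.univ_nonempty
    with hmx
  have hcmx : ∀ j, cumul ρ j (mx j) = 1 := by
    intro j
    rw [cumul, Finset.filter_true_of_mem (fun y _ => Finset.le_max' _ _ (mem_univ y)),
      hsum j]
  -- Represents
  have hrep : Represents π ρ := by
    intro i x
    rw [hπ]
    rw [sum_vol ρ hn hpos]
    have hset : (⋃ t ∈ Finset.univ.filter (fun t : ∀ i, S i => t i = x), Aset ρ t)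
        = iv ρ i x := by
      apply Set.Subset.antisymm
      · refine Set.iUnion₂_subset fun t ht => ?_
        have hti : t i = x := by simpa using ht
        have := Aset_subset ρ t i
        rwa [hti] at this
      · intro u hu
        have h0 : 0 < u := lt_of_le_of_lt (lowcum_nonneg ρ hpos i x) hu.1
        have hcov : ∀ j, ∃ y : S j, u ∈ iv ρ j y := by
          intro j
          have htop : u ≤ cumul ρ j (mx j) := by
            rw [hcmx j]
            exact hu.2.trans (cumul_le_one ρ hpos hsum i x)
          obtain ⟨y, _, hy⟩ := cover ρ hpos h0 htop
          exact ⟨y, hy⟩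
        choose c hc using hcov
        refine Set.mem_iUnion₂.mpr ⟨Function.update c i x, by simp, ?_⟩
        · rw [Aset]
          refine Set.mem_iInter.mpr fun j => ?_
          by_cases hj : j = i
          · subst hj
            rw [Function.update_self]
            exact hu
          · rw [Function.update_of_ne hj]
            exact hc j
    rw [hset]
    exact vol_iv ρ hpos i x
  -- cdf
  have hcdf : ∀ s : ∀ i, S i, cdfLe π s = ⨅ i, cumul ρ i (s i) := by
    intro s
    have hbdd : BddBelow (Set.range fun i => cumul ρ i (s i)) :=
      (Set.finite_range _).bddBelow
    rw [cdfLe, hπ, sum_vol ρ hn hpos]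
    have hset : (⋃ t ∈ Finset.univ.filter (fun t : ∀ i, S i => ∀ i, t i ≤ s i),
        Aset ρ t) = Set.Ioc 0 (⨅ i, cumul ρ i (s i)) := by
      apply Set.Subset.antisymm
      · refine Set.iUnion₂_subset fun t ht => ?_
        have hts : ∀ i, t i ≤ s i := by simpa using ht
        intro u hu
        have hu' : ∀ i, u ∈ iv ρ i (t i) := fun i => Aset_subset ρ t i hu
        constructor
        · exact lt_of_le_of_lt (lowcum_nonneg ρ hpos i0 (t i0)) (hu' i0).1
        · exact le_ciInf fun i =>
            (hu' i).2.trans (cumul_mono ρ hpos (hts i))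
      · intro u hu
        have hcov : ∀ j, ∃ y : S j, y ≤ s j ∧ u ∈ iv ρ j y := by
          intro j
          have : u ≤ cumul ρ j (s j) := hu.2.trans (ciInf_le hbdd j)
          exact cover ρ hpos hu.1 this
        choose c hc1 hc2 using hcov
        refine Set.mem_iUnion₂.mpr ⟨c, ?_, Set.mem_iInter.mpr hc2⟩
        simp only [Finset.mem_filter, Finset.mem_univ, true_and]
        exact hc1
    rw [hset]
    exact vol_Ioc0 (le_ciInf fun i => cumul_nonneg ρ hpos i (s i))
  -- total mass
  have htot : ∑ t : ∀ i, S i, π t = 1 := by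
    calc ∑ t : ∀ i, S i, π t
        = ∑ x : S i0, ∑ t ∈ Finset.univ.filter (fun t : ∀ i, S i => t i0 = x), π t :=
          (Finset.sum_fiberwise Finset.univ (fun t => t i0) π).symm
      _ = ∑ x : S i0, ρ i0 x := Finset.sum_congr rfl fun x _ => hrep i0 x
      _ = 1 := hsum i0
  exact ⟨π, ⟨fun t => ENNReal.toReal_nonneg, htot⟩, hrep, hcdf⟩
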